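/- Let (W,S) be a Coxeter system, let u, v ∈ W with u ≤ v in the Bruhat order, and let w be a reduced word for v. Then 𝓡_{u,w}(t) is a monic polynomial of degree ℓ(v) − ℓ(u). -/

import Mathlib

open Polynomial

variable {B W : Type*} [Group W] {M : CoxeterMatrix B}

open scoped Classical in
/-- The diagrammatic R̃-polynomial, defined by recursion on the word read from its last letter.
`dRAux cs ws u` where `ws` is the reversed word. -/
noncomputable def dRAux (cs : CoxeterSystem M W) : List B → W → Polynomial ℕ
  | [], u => if u = 1 then 1 else 0
  | s :: rest, u =>
      if cs.length (u * cs.simple s) < cs.length u then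
        dRAux cs rest (u * cs.simple s)
      else
        dRAux cs rest (u * cs.simple s) + Polynomial.X * dRAux cs rest u

/-- The diagrammatic R̃-polynomial `𝓡_{u,w}(t) ∈ ℕ[t]`. -/
noncomputable def dR (cs : CoxeterSystem M W) (u : W) (w : List B) : Polynomial ℕ :=
  dRAux cs w.reverse u

/-- `w` is a reduced word for `v`. -/
def IsReducedWordFor (cs : CoxeterSystem M W) (w : List B) (v : W) : Prop :=
  cs.wordProd w = v ∧ w.length = cs.length v

/-- Bruhat order via the subword property. -/
def BruhatLE (cs : CoxeterSystem M W) (u v : W) : Prop :=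
  ∃ w w' : List B, IsReducedWordFor cs w v ∧ List.Sublist w' w ∧ IsReducedWordFor cs w' u

namespace BruhatAux

variable (cs : CoxeterSystem M W)

local prefix:100 "σ" => cs.simple
local prefix:100 "π" => cs.wordProd
local prefix:100 "ℓ" => cs.length

open scoped Classical

/-- Action of a simple generator on `W × ZMod 2`. -/
noncomputable def permFun (i : B) : W × ZMod 2 → W × ZMod 2 :=
  fun p => (σ i * p.1 * σ i, p.2 + if p.1 = σ i then 1 else 0)

lemma conj_simple_eq_simple_iff (i : B) (t : W) : σ i * t * σ i = σ i ↔ t = σ i := by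
  constructor
  · intro h
    have := congrArg (fun x => σ i * x * σ i) h
    simpa [← mul_assoc, cs.simple_mul_simple_self, cs.simple_mul_simple_cancel_right] using this
  · rintro rfl
    rw [cs.simple_mul_simple_cancel_right]

lemma permFun_invol (i : B) (p : W × ZMod 2) : permFun cs i (permFun cs i p) = p := by
  obtain ⟨t, e⟩ := p
  simp only [permFun]
  refine Prod.ext ?_ ?_
  · simp [← mul_assoc, cs.simple_mul_simple_self, cs.simple_mul_simple_cancel_right]
  · by_cases h : t = σ i
    · subst h
      show (e + if σ i = σ i then (1 : ZMod 2) else 0) + (if σ i * σ i * σ i = σ i then (1 : ZMod 2) else 0) = e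
      rw [if_pos rfl, if_pos (show σ i * σ i * σ i = σ i by rw [cs.simple_mul_simple_cancel_right])]
      show e + 1 + 1 = e
      rw [add_assoc, (by decide : (1 : ZMod 2) + 1 = 0), add_zero]
    · show (e + if t = σ i then (1 : ZMod 2) else 0) + (if σ i * t * σ i = σ i then (1 : ZMod 2) else 0) = e
      rw [if_neg h, if_neg (show ¬ σ i * t * σ i = σ i by rw [conj_simple_eq_simple_iff]; exact h)]
      simp

/-- The permutation of `W × ZMod 2` attached to a simple generator. -/
noncomputable def sigma (i : B) : Equiv.Perm (W × ZMod 2) :=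
  ⟨permFun cs i, permFun cs i, permFun_invol cs i, permFun_invol cs i⟩

@[simp] lemma sigma_apply (i : B) (p : W × ZMod 2) :
    sigma cs i p = (σ i * p.1 * σ i, p.2 + if p.1 = σ i then 1 else 0) := rfl

/-- The count function for the pair `(i, j)`. -/
noncomputable def chi (i j : B) (t : W) : ZMod 2 :=
  (if t = σ j then 1 else 0) + (if t = σ j * σ i * σ j then 1 else 0)

lemma mul_sigma_apply (i j : B) (t : W) (e : ZMod 2) :
    (sigma cs i * sigma cs j) (t, e) =
      ((σ i * σ j) * t * (σ i * σ j)⁻¹, e + chi cs i j t) := by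
  rw [Equiv.Perm.mul_apply, sigma_apply, sigma_apply]
  refine Prod.ext ?_ ?_
  · show σ i * (σ j * t * σ j) * σ i = (σ i * σ j) * t * (σ i * σ j)⁻¹
    rw [mul_inv_rev, cs.inv_simple, cs.inv_simple]
    group
  · show e + (if t = σ j then 1 else 0) + (if σ j * t * σ j = σ i then 1 else 0)
      = e + chi cs i j t
    rw [chi, ← add_assoc]
    congr 2
    have : σ j * t * σ j = σ i ↔ t = σ j * σ i * σ j := by
      constructor
      · intro h
        have := congrArg (fun x => σ j * x * σ j) h
        simpa [← mul_assoc, cs.simple_mul_simple_self, cs.simple_mul_simple_cancel_right,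
          cs.simple_mul_simple_cancel_left] using this
      · rintro rfl
        rw [← mul_assoc, ← mul_assoc, cs.simple_mul_simple_self, one_mul,
          cs.simple_mul_simple_cancel_right]
    rw [this]

lemma mul_sigma_pow_apply (i j : B) (m : ℕ) (t : W) (e : ZMod 2) :
    ((sigma cs i * sigma cs j) ^ m) (t, e) =
      ((σ i * σ j) ^ m * t * ((σ i * σ j) ^ m)⁻¹,
        e + ∑ k ∈ Finset.range m,
          chi cs i j ((σ i * σ j) ^ k * t * ((σ i * σ j) ^ k)⁻¹)) := by
  induction m generalizing t e with
  | zero => simp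
  | succ m ih =>
    rw [pow_succ, Equiv.Perm.mul_apply, mul_sigma_apply, ih]
    refine Prod.ext ?_ ?_
    · show (σ i * σ j) ^ m * ((σ i * σ j) * t * (σ i * σ j)⁻¹) * ((σ i * σ j) ^ m)⁻¹
        = (σ i * σ j) ^ (m + 1) * t * ((σ i * σ j) ^ (m + 1))⁻¹
      generalize (σ i * σ j) = p
      group
    · show e + chi cs i j t + ∑ k ∈ Finset.range m,
          chi cs i j ((σ i * σ j) ^ k * ((σ i * σ j) * t * (σ i * σ j)⁻¹) * ((σ i * σ j) ^ k)⁻¹)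
        = e + ∑ k ∈ Finset.range (m + 1),
          chi cs i j ((σ i * σ j) ^ k * t * ((σ i * σ j) ^ k)⁻¹)
      rw [Finset.sum_range_succ']
      have hc : ∀ k : ℕ,
          (σ i * σ j) ^ k * ((σ i * σ j) * t * (σ i * σ j)⁻¹) * ((σ i * σ j) ^ k)⁻¹
            = (σ i * σ j) ^ (k + 1) * t * ((σ i * σ j) ^ (k + 1))⁻¹ := by
        intro k
        generalize (σ i * σ j) = p
        group
      simp only [hc, pow_zero, one_mul, inv_one, mul_one]
      ring

lemma conj_pow_simple (i j : B) (k : ℕ) :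
    σ j * (σ i * σ j) ^ k = ((σ i * σ j)⁻¹) ^ k * σ j := by
  have h : (σ j * (σ i * σ j) * (σ j)⁻¹) ^ k = σ j * (σ i * σ j) ^ k * (σ j)⁻¹ :=
    conj_pow
  have h2 : σ j * (σ i * σ j) * (σ j)⁻¹ = (σ i * σ j)⁻¹ := by
    rw [mul_inv_rev, cs.inv_simple, cs.inv_simple, mul_assoc,
      cs.simple_mul_simple_cancel_right]
  rw [h2] at h
  rw [h]
  group

lemma keyA (i j : B) (k : ℕ) :
    ((σ i * σ j) ^ k)⁻¹ * σ j * (σ i * σ j) ^ k = ((σ i * σ j)⁻¹) ^ (2 * k) * σ j := by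
  have h := conj_pow_simple cs i j k
  calc ((σ i * σ j) ^ k)⁻¹ * σ j * (σ i * σ j) ^ k
      = ((σ i * σ j)⁻¹) ^ k * (σ j * (σ i * σ j) ^ k) := by rw [inv_pow]; group
    _ = ((σ i * σ j)⁻¹) ^ k * (((σ i * σ j)⁻¹) ^ k * σ j) := by rw [h]
    _ = ((σ i * σ j)⁻¹) ^ (2 * k) * σ j := by
        rw [← mul_assoc, ← pow_add, two_mul]

lemma keyB (i j : B) (k : ℕ) :
    ((σ i * σ j) ^ k)⁻¹ * (σ j * σ i * σ j) * (σ i * σ j) ^ k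
      = ((σ i * σ j)⁻¹) ^ (2 * k + 1) * σ j := by
  have h := conj_pow_simple cs i j k
  have hq : σ j * σ i = (σ i * σ j)⁻¹ := by
    rw [mul_inv_rev, cs.inv_simple, cs.inv_simple]
  calc ((σ i * σ j) ^ k)⁻¹ * (σ j * σ i * σ j) * (σ i * σ j) ^ k
      = ((σ i * σ j)⁻¹) ^ k * (σ j * σ i) * (σ j * (σ i * σ j) ^ k) := by
        rw [inv_pow]; group
    _ = ((σ i * σ j)⁻¹) ^ k * (σ i * σ j)⁻¹ * (((σ i * σ j)⁻¹) ^ k * σ j) := by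
        rw [hq, h]
    _ = ((σ i * σ j)⁻¹) ^ (2 * k + 1) * σ j := by
        rw [← pow_succ, ← mul_assoc, ← pow_add]
        congr 2
        omega

lemma sum_double {R : Type*} [AddCommMonoid R] (g : ℕ → R) (m : ℕ) :
    ∑ k ∈ Finset.range m, (g (2 * k) + g (2 * k + 1)) = ∑ n ∈ Finset.range (2 * m), g n := by
  induction m with
  | zero => simp
  | succ m ih =>
    rw [Finset.sum_range_succ, ih, (by omega : 2 * (m + 1) = (2 * m + 1) + 1),
      Finset.sum_range_succ, Finset.sum_range_succ, add_assoc]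

theorem sigma_liftable : M.IsLiftable (sigma cs) := by
  intro i j
  apply Equiv.ext
  rintro ⟨t, e⟩
  rw [Equiv.Perm.one_apply, mul_sigma_pow_apply]
  have hm : (σ i * σ j) ^ M i j = 1 := cs.simple_mul_simple_pow i j
  refine Prod.ext ?_ ?_
  · show (σ i * σ j) ^ M i j * t * ((σ i * σ j) ^ M i j)⁻¹ = t
    rw [hm]; group
  · show e + ∑ k ∈ Finset.range (M i j),
        chi cs i j ((σ i * σ j) ^ k * t * ((σ i * σ j) ^ k)⁻¹) = e
    have hrw : ∀ k, chi cs i j ((σ i * σ j) ^ k * t * ((σ i * σ j) ^ k)⁻¹)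
        = (if t = ((σ i * σ j)⁻¹) ^ (2 * k) * σ j then (1 : ZMod 2) else 0)
          + (if t = ((σ i * σ j)⁻¹) ^ (2 * k + 1) * σ j then (1 : ZMod 2) else 0) := by
      intro k
      rw [chi]
      congr 1
      · congr 1
        rw [eq_iff_iff]
        constructor
        · intro h
          have h3 : t = ((σ i * σ j) ^ k)⁻¹ * ((σ i * σ j) ^ k * t * ((σ i * σ j) ^ k)⁻¹)
              * (σ i * σ j) ^ k := by group
          rw [h, keyA] at h3
          exact h3
        · rintro rfl
          rw [← keyA]; group
      · congr 1
        rw [eq_iff_iff]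
        constructor
        · intro h
          have h3 : t = ((σ i * σ j) ^ k)⁻¹ * ((σ i * σ j) ^ k * t * ((σ i * σ j) ^ k)⁻¹)
              * (σ i * σ j) ^ k := by group
          rw [h, keyB] at h3
          exact h3
        · rintro rfl
          rw [← keyB]; group
    simp only [hrw]
    rw [sum_double (fun n => if t = ((σ i * σ j)⁻¹) ^ n * σ j then (1 : ZMod 2) else 0)]
    have hq1 : ((σ i * σ j)⁻¹) ^ (M i j) = 1 := by rw [inv_pow, hm, inv_one]
    rw [two_mul, Finset.sum_range_add]
    have : ∀ k, (if t = ((σ i * σ j)⁻¹) ^ (M i j + k) * σ j then (1 : ZMod 2) else 0)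
        = (if t = ((σ i * σ j)⁻¹) ^ k * σ j then (1 : ZMod 2) else 0) := by
      intro k
      rw [pow_add, hq1, one_mul]
    simp only [this]
    rw [← Finset.sum_add_distrib]
    have : ∀ x ∈ Finset.range (M i j),
        (if t = ((σ i * σ j)⁻¹) ^ x * σ j then (1 : ZMod 2) else 0)
          + (if t = ((σ i * σ j)⁻¹) ^ x * σ j then (1 : ZMod 2) else 0) = 0 := by
      intro x _
      exact CharTwo.add_self_eq_zero _
    rw [Finset.sum_congr rfl this, Finset.sum_const_zero, add_zero]

/-- The lifted homomorphism. -/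
noncomputable def phi : W →* Equiv.Perm (W × ZMod 2) :=
  cs.lift ⟨sigma cs, sigma_liftable cs⟩

lemma phi_simple (i : B) : phi cs (σ i) = sigma cs i :=
  cs.lift_apply_simple (sigma_liftable cs) i

lemma phi_fst (w : W) : ∀ t : W, ∀ e : ZMod 2, (phi cs w (t, e)).1 = w * t * w⁻¹ := by
  induction w using cs.simple_induction_left with
  | one => intro t e; simp
  | mul_simple_left w i ih =>
    intro t e
    rw [map_mul, Equiv.Perm.mul_apply, phi_simple, sigma_apply]
    dsimp only
    rw [ih t e, mul_inv_rev, cs.inv_simple]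
    group

lemma phi_snd (w : W) : ∀ t : W, ∀ e : ZMod 2, (phi cs w (t, e)).2 = e + (phi cs w (t, 0)).2 := by
  induction w using cs.simple_induction_left with
  | one => intro t e; simp
  | mul_simple_left w i ih =>
    intro t e
    rw [map_mul, Equiv.Perm.mul_apply, Equiv.Perm.mul_apply, phi_simple, sigma_apply, sigma_apply]
    dsimp only
    rw [phi_fst cs w t e, phi_fst cs w t 0, ih t e, add_assoc]

/-- The descent cocycle with values in `ZMod 2`. -/
noncomputable def zeta (w t : W) : ZMod 2 := (phi cs w (t, 0)).2

lemma zeta_one (t : W) : zeta cs 1 t = 0 := by simp [zeta]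

lemma zeta_simple (i : B) (t : W) : zeta cs (σ i) t = if t = σ i then 1 else 0 := by
  simp [zeta, phi_simple]

lemma zeta_mul (a b t : W) : zeta cs (a * b) t = zeta cs b t + zeta cs a (b * t * b⁻¹) := by
  unfold zeta
  rw [map_mul, Equiv.Perm.mul_apply]
  have h : phi cs b (t, 0) = (b * t * b⁻¹, zeta cs b t) := by
    refine Prod.ext ?_ rfl
    exact phi_fst cs b t 0
  rw [h]
  exact phi_snd cs a (b * t * b⁻¹) (zeta cs b t)

lemma char_two_cancel {x y : ZMod 2} (h : x + y = 0) : x = y := by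
  revert h; revert x y; decide

lemma zeta_refl_self {t : W} (ht : cs.IsReflection t) : zeta cs t t = 1 := by
  obtain ⟨x, i, rfl⟩ := ht
  set t := x * σ i * x⁻¹ with hdef
  have h1 : x⁻¹ * t * (x⁻¹)⁻¹ = σ i := by rw [hdef]; group
  have h2 : σ i * σ i * (σ i)⁻¹ = σ i := by group
  have hsplit : t = (x * σ i) * x⁻¹ := by rw [hdef]
  have e1 : zeta cs t t = zeta cs x⁻¹ t + zeta cs (x * σ i) (σ i) := by
    nth_rw 1 [hsplit]
    rw [zeta_mul, h1]
  have e2 : zeta cs (x * σ i) (σ i) = 1 + zeta cs x (σ i) := by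
    rw [zeta_mul, h2, zeta_simple, if_pos rfl]
  have e3 : zeta cs x⁻¹ t = zeta cs x (σ i) := by
    apply char_two_cancel
    have : zeta cs (x * x⁻¹) t = 0 := by rw [mul_inv_cancel]; exact zeta_one cs t
    rw [zeta_mul, h1] at this
    exact this
  rw [e1, e2, e3]
  generalize zeta cs x (σ i) = a
  revert a; decide

lemma zeta_wordProd_count (ω : List B) (t : W) :
    zeta cs (π ω) t = (List.count t (cs.rightInvSeq ω) : ZMod 2) := by
  induction ω with
  | nil => simp [zeta_one]
  | cons i ω ih =>
    rw [cs.wordProd_cons, zeta_mul, ih, zeta_simple]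
    have hris : cs.rightInvSeq (i :: ω) = ((π ω)⁻¹ * σ i * π ω) :: cs.rightInvSeq ω := rfl
    rw [hris, List.count_cons]
    have hiff : (π ω * t * (π ω)⁻¹ = σ i) ↔ ((π ω)⁻¹ * σ i * π ω = t) := by
      constructor
      · intro h; rw [← h]; group
      · intro h; rw [← h]; group
    push_cast
    simp only [beq_iff_eq]
    rw [if_congr hiff rfl rfl]

lemma descent_of_zeta {w t : W} (h : zeta cs w t = 1) : ℓ (w * t) < ℓ w := by
  obtain ⟨ω, hred, hw⟩ := cs.exists_reduced_word' w
  subst hw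
  rw [zeta_wordProd_count] at h
  have hmem : t ∈ cs.rightInvSeq ω := by
    by_contra hand
    rw [List.count_eq_zero_of_not_mem hand] at h
    simp at h
  exact (cs.isRightInversion_of_mem_rightInvSeq hred hmem).2

lemma zeta_of_descent {w t : W} (ht : cs.IsReflection t) (h : ℓ (w * t) < ℓ w) :
    zeta cs w t = 1 := by
  by_contra hne
  have h0 : zeta cs w t = 0 := by
    generalize zeta cs w t = a at *
    revert hne; revert a; decide
  have h1 : zeta cs (w * t) t = 1 := by
    rw [zeta_mul]
    have h2 : t * t * t⁻¹ = t := by group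
    rw [h2, zeta_refl_self cs ht, h0, add_zero]
  have := descent_of_zeta cs h1
  rw [mul_assoc, ht.mul_self, mul_one] at this
  omega

lemma mem_rightInvSeq {ω : List B} {t : W} (hred : cs.IsReduced ω) (ht : cs.IsReflection t)
    (h : ℓ (π ω * t) < ℓ (π ω)) : t ∈ cs.rightInvSeq ω := by
  have h1 := zeta_of_descent cs ht h
  rw [zeta_wordProd_count] at h1
  by_contra hand
  rw [List.count_eq_zero_of_not_mem hand] at h1
  simp at h1

/-- Strong exchange property. -/
lemma exists_eraseIdx {ω : List B} {t : W} (hred : cs.IsReduced ω) (ht : cs.IsReflection t)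
    (h : ℓ (π ω * t) < ℓ (π ω)) :
    ∃ j, j < ω.length ∧ π (ω.eraseIdx j) = π ω * t := by
  have hmem := mem_rightInvSeq cs hred ht h
  obtain ⟨j, hj, hget⟩ := List.mem_iff_getElem.mp hmem
  rw [cs.length_rightInvSeq] at hj
  refine ⟨j, hj, ?_⟩
  rw [← cs.wordProd_mul_getD_rightInvSeq ω j]
  congr 1
  rw [List.getD_eq_getElem _ 1 (by rwa [cs.length_rightInvSeq])]
  exact hget

/-- Deletion: every word contains a reduced sublist with the same product. -/
lemma exists_reduced_sublist (ω : List B) :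
    ∃ c, c.Sublist ω ∧ cs.IsReduced c ∧ π c = π ω := by
  induction ω using List.reverseRecOn with
  | nil => exact ⟨[], List.Sublist.refl _, by simp [CoxeterSystem.IsReduced], rfl⟩
  | append_singleton ρ i ih =>
    obtain ⟨c, hsub, hred, hprod⟩ := ih
    have hcl : ℓ (π c) = c.length := hred
    rcases cs.length_mul_simple (π ρ) i with hup | hdown
    · refine ⟨c ++ [i], hsub.append (List.Sublist.refl [i]), ?_, ?_⟩
      · show ℓ (π (c ++ [i])) = (c ++ [i]).length
        rw [cs.wordProd_append, hprod, List.length_append]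
        rw [cs.wordProd_singleton, hup, ← hprod, hcl]
        simp
      · rw [cs.wordProd_append, cs.wordProd_append, hprod]
    · have hlt : ℓ (π c * σ i) < ℓ (π c) := by
        rw [hprod]
        omega
      obtain ⟨j, hj, heq⟩ := exists_eraseIdx cs hred (cs.isReflection_simple i) hlt
      refine ⟨c.eraseIdx j, ?_, ?_, ?_⟩
      · exact ((c.eraseIdx_sublist j).trans hsub).trans (List.sublist_append_left ρ [i])
      · show ℓ (π (c.eraseIdx j)) = (c.eraseIdx j).length
        rw [heq, List.length_eraseIdx_of_lt hj, hprod]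
        have e1 : ℓ (π ρ * σ i) + 1 = ℓ (π ρ) := hdown
        have e2 : ℓ (π ρ) = c.length := by rw [← hprod, hcl]
        omega
      · rw [heq, hprod, cs.wordProd_append, cs.wordProd_singleton]

/-- Bruhat order via chains of reflections. -/
inductive TLE (cs : CoxeterSystem M W) : W → W → Prop
  | refl (u : W) : TLE cs u u
  | step {u v : W} (t : W) (h : TLE cs u v) (ht : cs.IsReflection t)
      (hl : cs.length v < cs.length (v * t)) : TLE cs u (v * t)

lemma tle_trans {a b c : W} (h1 : TLE cs a b) (h2 : TLE cs b c) : TLE cs a c := by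
  induction h2 with
  | refl => exact h1
  | step t h ht hl ih => exact TLE.step t ih ht hl

lemma tle_length_le {u v : W} (h : TLE cs u v) : ℓ u ≤ ℓ v := by
  induction h with
  | refl => exact le_rfl
  | step t h ht hl ih => omega

lemma tle_one_right {u : W} (h : TLE cs u 1) : u = 1 := by
  have := tle_length_le cs h
  rw [cs.length_one] at this
  exact cs.length_eq_zero_iff.mp (Nat.le_zero.mp this)

/-- The subword property: chains give reduced subwords of every reduced word. -/
lemma sub_of_tle {u v : W} (h : TLE cs u v) :
    ∀ ω : List B, cs.IsReduced ω → π ω = v →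
      ∃ c, c.Sublist ω ∧ cs.IsReduced c ∧ π c = u := by
  induction h with
  | refl => exact fun ω hred hprod => ⟨ω, List.Sublist.refl _, hred, hprod⟩
  | @step v' t h ht hl ih =>
    intro ω hred hprod
    have hvt : π ω * t = v' := by
      rw [hprod, mul_assoc, ht.mul_self, mul_one]
    have hlt : ℓ (π ω * t) < ℓ (π ω) := by
      rw [hvt, hprod]; exact hl
    obtain ⟨j, hj, heq⟩ := exists_eraseIdx cs hred ht hlt
    obtain ⟨d, hdsub, hdred, hdprod⟩ := exists_reduced_sublist cs (ω.eraseIdx j)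
    obtain ⟨c, hcsub, hcred, hcprod⟩ := ih d hdred (by rw [hdprod, heq, hvt])
    exact ⟨c, (hcsub.trans hdsub).trans (ω.eraseIdx_sublist j), hcred, hcprod⟩

/-- The joint induction: subword implies chain, and the two lifting properties. -/
lemma joint (n : ℕ) :
    (∀ ω : List B, cs.IsReduced ω → ω.length ≤ n →
        ∀ c : List B, c.Sublist ω → cs.IsReduced c → TLE cs (π c) (π ω))
    ∧ (∀ u v : W, TLE cs u v → ℓ v ≤ n → ∀ i : B,
        ℓ u < ℓ (u * σ i) → ℓ (v * σ i) < ℓ v → TLE cs (u * σ i) v)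
    ∧ (∀ u v : W, TLE cs u v → ℓ v ≤ n → ∀ i : B,
        ℓ u < ℓ (u * σ i) → ℓ v < ℓ (v * σ i) → TLE cs (u * σ i) (v * σ i)) := by
  induction n using Nat.strong_induction_on with
  | _ n IH =>
  have hC : ∀ ω : List B, cs.IsReduced ω → ω.length ≤ n →
      ∀ c : List B, c.Sublist ω → cs.IsReduced c → TLE cs (π c) (π ω) := by
    intro ω hred hlen c hcsub hcred
    rcases List.eq_nil_or_concat' ω with rfl | ⟨a, i, rfl⟩
    · rw [List.sublist_nil.mp hcsub]
      exact TLE.refl _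
    · have hlena : a.length + 1 ≤ n := by simpa using hlen
      have hared : cs.IsReduced a := by
        have := CoxeterSystem.IsReduced.take hred a.length
        rwa [List.take_left] at this
      have hπ : π (a ++ [i]) = π a * σ i := by
        rw [cs.wordProd_append, cs.wordProd_singleton]
      have hstep : ℓ (π a) < ℓ (π a * σ i) := by
        have h1 : ℓ (π (a ++ [i])) = a.length + 1 := by
          rw [hred]; simp
        have h2 : ℓ (π a) = a.length := hared
        rw [hπ] at h1
        omega
      rcases List.sublist_append_iff.mp hcsub with ⟨c₁, c₂, rfl, hc1, hc2⟩
      rcases List.sublist_singleton.mp hc2 with rfl | rfl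
      · rw [List.append_nil] at *
        have htle : TLE cs (π c₁) (π a) :=
          (IH a.length (by omega)).1 a hared le_rfl c₁ hc1 hcred
        rw [hπ]
        exact TLE.step (σ i) htle (cs.isReflection_simple i) hstep
      · have hc1red : cs.IsReduced c₁ := by
          have := CoxeterSystem.IsReduced.take hcred c₁.length
          rwa [List.take_left] at this
        have hπc : π (c₁ ++ [i]) = π c₁ * σ i := by
          rw [cs.wordProd_append, cs.wordProd_singleton]
        have hstepc : ℓ (π c₁) < ℓ (π c₁ * σ i) := by
          have h1 : ℓ (π (c₁ ++ [i])) = c₁.length + 1 := by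
            rw [hcred]; simp
          have h2 : ℓ (π c₁) = c₁.length := hc1red
          rw [hπc] at h1
          omega
        have htle : TLE cs (π c₁) (π a) :=
          (IH a.length (by omega)).1 a hared le_rfl c₁ hc1 hc1red
        have hZ := (IH a.length (by omega)).2.2 (π c₁) (π a) htle
          (le_of_eq hared) i hstepc hstep
        rw [hπ, hπc]
        exact hZ
  refine ⟨hC, ?_, ?_⟩
  · -- Z' : descent on v, ascent on u
    intro u v htle hlv i hui hvi
    obtain ⟨ω₀, hlen₀, hprod₀⟩ := cs.exists_reduced_word (v * σ i)
    replace hlen₀ : ω₀.length = ℓ (v * σ i) := by rw [hprod₀]; exact hlen₀.symm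
    have hπw : π (ω₀ ++ [i]) = v := by
      rw [cs.wordProd_append, cs.wordProd_singleton, ← hprod₀,
        cs.simple_mul_simple_cancel_right]
    have hvlen : ℓ (v * σ i) + 1 = ℓ v := by
      rcases cs.length_mul_simple v i with h | h
      · omega
      · exact h
    have hwred : cs.IsReduced (ω₀ ++ [i]) := by
      show ℓ (π (ω₀ ++ [i])) = _
      rw [hπw]
      simp [hlen₀]
      omega
    obtain ⟨c, hcsub, hcred, hcprod⟩ := sub_of_tle cs htle (ω₀ ++ [i]) hwred hπw
    rcases List.sublist_append_iff.mp hcsub with ⟨c₁, c₂, rfl, hc1, hc2⟩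
    rcases List.sublist_singleton.mp hc2 with rfl | rfl
    · rw [List.append_nil] at *
      -- c₁ is a reduced word for u not using the last letter; append it
      have hgood : cs.IsReduced (c₁ ++ [i]) := by
        show ℓ (π (c₁ ++ [i])) = _
        rw [cs.wordProd_append, cs.wordProd_singleton, hcprod]
        have h1 : ℓ (u * σ i) = ℓ u + 1 := by
          rcases cs.length_mul_simple u i with h | h
          · exact h
          · omega
        have h2 : ℓ u = c₁.length := by rw [← hcprod]; exact hcred
        simp
        omega
      have hwlen : (ω₀ ++ [i]).length ≤ n := by
        simp only [List.length_append, List.length_singleton, hlen₀]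
        omega
      have := hC (ω₀ ++ [i]) hwred hwlen
        (c₁ ++ [i]) (hc1.append (List.Sublist.refl [i])) hgood
      rwa [hπw, cs.wordProd_append, cs.wordProd_singleton, hcprod] at this
    · -- impossible: would give a too-short word for u * σ i
      exfalso
      have h1 : π c₁ = u * σ i := by
        have := hcprod
        rw [cs.wordProd_append, cs.wordProd_singleton] at this
        rw [← this, cs.simple_mul_simple_cancel_right]
      have h2 : ℓ u = c₁.length + 1 := by
        have h4 : ℓ (π (c₁ ++ [i])) = (c₁ ++ [i]).length := hcred
        rw [hcprod] at h4
        simpa using h4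
      have h3 : ℓ (u * σ i) ≤ c₁.length := by
        rw [← h1]; exact cs.length_wordProd_le c₁
      omega
  · -- Z : ascent on both
    intro u v htle
    induction htle with
    | refl => intro _ _ _ _; exact TLE.refl _
    | @step v' t h ht hl ih =>
      intro hlv i hui hvi
      by_cases hcase : ℓ v' < ℓ (v' * σ i)
      · have h1 : TLE cs (u * σ i) (v' * σ i) := ih (by omega) i hui hcase
        have hrefl : cs.IsReflection (σ i * t * σ i) := by
          have := ht.conj (σ i)
          rwa [cs.inv_simple] at this
        have hmuls : (v' * σ i) * (σ i * t * σ i) = v' * t * σ i := by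
          rw [← mul_assoc, ← mul_assoc, mul_assoc v' (σ i) (σ i),
            cs.simple_mul_simple_self, mul_one]
        have hlen2 : ℓ (v' * σ i) < ℓ ((v' * σ i) * (σ i * t * σ i)) := by
          rw [hmuls]
          have e1 : ℓ (v' * t * σ i) = ℓ (v' * t) + 1 := by
            rcases cs.length_mul_simple (v' * t) i with h | h
            · exact h
            · omega
          have e2 : ℓ (v' * σ i) = ℓ v' + 1 := by
            rcases cs.length_mul_simple v' i with h | h
            · exact h
            · omega
          omega
        have := TLE.step _ h1 hrefl hlen2
        rwa [hmuls] at this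
      · have hlt : ℓ (v' * σ i) < ℓ v' := by
          have := cs.length_mul_simple_ne v' i
          omega
        have hZ' := (IH (ℓ v') (by omega)).2.1 u v' h le_rfl i hui hlt
        have h3 : TLE cs (u * σ i) (v' * t) := TLE.step t hZ' ht hl
        exact TLE.step (σ i) h3 (cs.isReflection_simple i) hvi

lemma dRAux_nil (u : W) : dRAux cs [] u = if u = 1 then 1 else 0 := rfl

lemma dRAux_cons (s : B) (rest : List B) (u : W) :
    dRAux cs (s :: rest) u =
      if cs.length (u * cs.simple s) < cs.length u then
        dRAux cs rest (u * cs.simple s)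
      else
        dRAux cs rest (u * cs.simple s) + Polynomial.X * dRAux cs rest u := rfl

lemma dRAux_spec : ∀ ws : List B, cs.IsReduced ws.reverse → ∀ u : W,
    (TLE cs u (π ws.reverse) →
      (dRAux cs ws u).Monic ∧ (dRAux cs ws u).natDegree = ℓ (π ws.reverse) - ℓ u)
    ∧ (¬ TLE cs u (π ws.reverse) → dRAux cs ws u = 0) := by
  intro ws
  induction ws with
  | nil =>
    intro _ u
    simp only [List.reverse_nil, cs.wordProd_nil]
    constructor
    · intro h
      have hu : u = 1 := tle_one_right cs h
      subst hu
      rw [dRAux_nil, if_pos rfl]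
      exact ⟨Polynomial.monic_one, by simp⟩
    · intro h
      have hu : u ≠ 1 := fun he => h (he ▸ TLE.refl u)
      rw [dRAux_nil, if_neg hu]
  | cons s rest ih =>
    intro hred u
    have hrev : (s :: rest).reverse = rest.reverse ++ [s] := by simp
    rw [hrev] at hred ⊢
    set a : List B := rest.reverse with ha_def
    have ha : cs.IsReduced a := by
      have := CoxeterSystem.IsReduced.take hred a.length
      rwa [List.take_left] at this
    have hπ : π (a ++ [s]) = π a * σ s := by
      rw [cs.wordProd_append, cs.wordProd_singleton]
    have hlen1 : ℓ (π (a ++ [s])) = a.length + 1 := by rw [hred]; simp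
    have hlen2 : ℓ (π a) = a.length := ha
    have hstep : ℓ (π a) < ℓ (π a * σ s) := by rw [hπ] at hlen1; omega
    have ihr := ih ha
    -- The canonical cancellation identity
    have hcanc : ∀ x : W, x * σ s * σ s = x := fun x => cs.simple_mul_simple_cancel_right (w := x) s
    by_cases hcase : ℓ (u * σ s) < ℓ u
    · -- last letter is a descent of u
      have hu_up : ℓ (u * σ s) < ℓ (u * σ s * σ s) := by rw [hcanc]; exact hcase
      have hux : TLE cs (u * σ s) u := by
        have := TLE.step (σ s) (TLE.refl (u * σ s)) (cs.isReflection_simple s) hu_up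
        rwa [hcanc] at this
      rw [dRAux_cons, if_pos hcase, hπ]
      constructor
      · intro h1
        -- establish TLE (u * σ s) (π a)
        have htle' : TLE cs (u * σ s) (π a) := by
          obtain ⟨c, hcsub, hcred, hcprod⟩ := sub_of_tle cs h1 (a ++ [s]) hred (by rw [hπ])
          rcases List.sublist_append_iff.mp hcsub with ⟨c₁, c₂, rfl, hc1, hc2⟩
          rcases List.sublist_singleton.mp hc2 with rfl | rfl
          · rw [List.append_nil] at hcprod hcred
            have hCu : TLE cs u (π a) := by
              have := (joint cs a.length).1 a ha le_rfl c₁ hc1 hcred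
              rwa [hcprod] at this
            exact tle_trans cs hux hCu
          · have hc1red : cs.IsReduced c₁ := by
              have := CoxeterSystem.IsReduced.take hcred c₁.length
              rwa [List.take_left] at this
            have hπc : π c₁ = u * σ s := by
              have h5 : π (c₁ ++ [s]) = π c₁ * σ s := by
                rw [cs.wordProd_append, cs.wordProd_singleton]
              rw [h5] at hcprod
              rw [← hcprod, hcanc]
            have := (joint cs a.length).1 a ha le_rfl c₁ hc1 hc1red
            rwa [hπc] at this
        obtain ⟨hm, hd⟩ := (ihr (u * σ s)).1 htle'
        refine ⟨hm, ?_⟩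
        rw [hd]
        have e1 : ℓ (u * σ s) + 1 = ℓ u := by
          rcases cs.length_mul_simple u s with h | h
          · omega
          · exact h
        have e2 : ℓ (u * σ s) ≤ ℓ (π a) := tle_length_le cs htle'
        rw [hπ] at hlen1
        omega
      · intro h2
        apply (ihr (u * σ s)).2
        intro hcon
        apply h2
        have := (joint cs (ℓ (π a))).2.2 (u * σ s) (π a) hcon le_rfl s hu_up hstep
        rwa [hcanc] at this
    · -- last letter is an ascent of u
      have hgt : ℓ u < ℓ (u * σ s) := by
        have := cs.length_mul_simple_ne u s
        omega
      have huu : TLE cs u (u * σ s) :=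
        TLE.step (σ s) (TLE.refl u) (cs.isReflection_simple s) hgt
      rw [dRAux_cons, if_neg hcase, hπ]
      constructor
      · intro h1
        -- establish TLE u (π a)
        have htle' : TLE cs u (π a) := by
          obtain ⟨c, hcsub, hcred, hcprod⟩ := sub_of_tle cs h1 (a ++ [s]) hred (by rw [hπ])
          rcases List.sublist_append_iff.mp hcsub with ⟨c₁, c₂, rfl, hc1, hc2⟩
          rcases List.sublist_singleton.mp hc2 with rfl | rfl
          · rw [List.append_nil] at hcprod hcred
            have := (joint cs a.length).1 a ha le_rfl c₁ hc1 hcred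
            rwa [hcprod] at this
          · exfalso
            have hπc : π c₁ = u * σ s := by
              have h5 : π (c₁ ++ [s]) = π c₁ * σ s := by
                rw [cs.wordProd_append, cs.wordProd_singleton]
              rw [h5] at hcprod
              rw [← hcprod, hcanc]
            have h6 : ℓ u = c₁.length + 1 := by
              have h7 : ℓ (π (c₁ ++ [s])) = (c₁ ++ [s]).length := hcred
              rw [hcprod] at h7
              simpa using h7
            have h8 : ℓ (u * σ s) ≤ c₁.length := by
              rw [← hπc]
              exact cs.length_wordProd_le c₁
            omega
        obtain ⟨hmB, hdB⟩ := (ihr u).1 htle'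
        have huv' : ℓ u ≤ ℓ (π a) := tle_length_le cs htle'
        have hmXB : (Polynomial.X * dRAux cs rest u).Monic :=
          Polynomial.monic_X.mul hmB
        have hdXB : (Polynomial.X * dRAux cs rest u).natDegree = ℓ (π a) - ℓ u + 1 := by
          rw [Polynomial.monic_X.natDegree_mul hmB, Polynomial.natDegree_X, hdB]
          omega
        have hdeg : (dRAux cs rest (u * σ s)).degree
            < (Polynomial.X * dRAux cs rest u).degree := by
          by_cases hA : TLE cs (u * σ s) (π a)
          · obtain ⟨hmA, hdA⟩ := (ihr (u * σ s)).1 hA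
            rw [Polynomial.degree_eq_natDegree hmA.ne_zero,
              Polynomial.degree_eq_natDegree hmXB.ne_zero, hdA, hdXB, Nat.cast_lt]
            have e : ℓ (u * σ s) = ℓ u + 1 := by
              rcases cs.length_mul_simple u s with h | h
              · exact h
              · omega
            omega
          · rw [(ihr (u * σ s)).2 hA, Polynomial.degree_zero]
            rw [bot_lt_iff_ne_bot, ne_eq, Polynomial.degree_eq_bot]
            exact hmXB.ne_zero
        refine ⟨hmXB.add_of_right hdeg, ?_⟩
        rw [Polynomial.natDegree_eq_of_degree_eq (Polynomial.degree_add_eq_right_of_degree_lt hdeg),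
          hdXB]
        rw [hπ] at hlen1
        omega
      · intro h2
        have hnB : ¬ TLE cs u (π a) := by
          intro hcon
          exact h2 (TLE.step (σ s) hcon (cs.isReflection_simple s) hstep)
        have hnA : ¬ TLE cs (u * σ s) (π a) := by
          intro hcon
          exact hnB (tle_trans cs huu hcon)
        rw [(ihr u).2 hnB, (ihr (u * σ s)).2 hnA, mul_zero, add_zero]

end BruhatAux

open scoped Classical in
/-- For `u ≤ v` in the Bruhat order and `w` a reduced word for `v`, the diagrammatic
R̃-polynomial `𝓡_{u,w}` is monic of degree `ℓ(v) − ℓ(u)`. -/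
theorem dR_monic_of_bruhatLE (cs : CoxeterSystem M W) (u v : W) (huv : BruhatLE cs u v)
    (w : List B) (hw : IsReducedWordFor cs w v) :
    (dR cs u w).Monic ∧ (dR cs u w).natDegree = cs.length v - cs.length u := by
  obtain ⟨w₀, w₀', hw₀, hsub, hw₀'⟩ := huv
  have hw₀red : cs.IsReduced w₀ := by
    show cs.length (cs.wordProd w₀) = w₀.length
    rw [hw₀.1, hw₀.2]
  have hw₀'red : cs.IsReduced w₀' := by
    show cs.length (cs.wordProd w₀') = w₀'.length
    rw [hw₀'.1, hw₀'.2]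
  have htle : BruhatAux.TLE cs u v := by
    have := (BruhatAux.joint cs w₀.length).1 w₀ hw₀red le_rfl w₀' hsub hw₀'red
    rwa [hw₀.1, hw₀'.1] at this
  have hwred : cs.IsReduced w.reverse.reverse := by
    rw [List.reverse_reverse]
    show cs.length (cs.wordProd w) = w.length
    rw [hw.1, hw.2]
  have hπ : cs.wordProd w.reverse.reverse = v := by
    rw [List.reverse_reverse, hw.1]
  have := (BruhatAux.dRAux_spec cs w.reverse hwred u).1 (by rw [hπ]; exact htle)
  rw [hπ] at this
  exact this
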